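/- Let Θ be a finite nonempty set, Φ : Δ_Θ → ℝ a differentiable entropy, and λ^Φ(μ) := Φ*(∇Φ(μ))·𝟏 − ∇Φ(μ). Then for every μ in the relative interior of Δ_Θ and every a ∈ ℝ^Θ: −Φ*(−λ^Φ(μ) − a) = inf_{μ' ∈ Δ_Θ} [⟨μ', a⟩ + D_Φ(μ', μ)]. Consequently, for a real number c, the inequality c ≤ −Φ*(−λ^Φ(μ) − a) holds if and only if c ≤ ⟨μ', a⟩ + D_Φ(μ', μ) for all μ' ∈ Δ_Θ. -/
import Mathlib

open Finset

/-- The probability simplex over a finite set `Θ`. -/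
def probSimplex (Θ : Type*) [Fintype Θ] : Set (Θ → ℝ) :=
  {μ | (∀ θ, 0 ≤ μ θ) ∧ ∑ θ, μ θ = 1}

/-- The relative interior of the probability simplex. -/
def probSimplexRI (Θ : Type*) [Fintype Θ] : Set (Θ → ℝ) :=
  {μ | (∀ θ, 0 < μ θ) ∧ ∑ θ, μ θ = 1}

/-- Standard inner product on `ℝ^Θ`. -/
noncomputable def ip {Θ : Type*} [Fintype Θ] (v w : Θ → ℝ) : ℝ := ∑ θ, v θ * w θ

/-- Convex conjugate of a function on the probability simplex:
`Φ*(v) = sup_{μ ∈ Δ_Θ} ⟨μ, v⟩ − Φ(μ)`. -/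
noncomputable def conjF {Θ : Type*} [Fintype Θ] (Φ : (Θ → ℝ) → ℝ) (v : Θ → ℝ) : ℝ :=
  sSup ((fun μ => ip μ v - Φ μ) '' probSimplex Θ)

/-- The continuous linear functional `w ↦ ⟨g, w⟩` associated with a vector `g : Θ → ℝ`;
used to express that `g` is a gradient. -/
noncomputable def toCLM {Θ : Type*} [Fintype Θ] (g : Θ → ℝ) : (Θ → ℝ) →L[ℝ] ℝ :=
  ∑ θ, g θ • (ContinuousLinearMap.proj θ : (Θ → ℝ) →L[ℝ] ℝ)

/-- Bregman divergence `D_Φ(μ', μ) = Φ(μ') − Φ(μ) − ⟨∇Φ(μ), μ' − μ⟩`, where the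
gradient of `Φ` is given by `g`. -/
noncomputable def bregDiv {Θ : Type*} [Fintype Θ] (Φ : (Θ → ℝ) → ℝ)
    (g : (Θ → ℝ) → Θ → ℝ) (μ' μ : Θ → ℝ) : ℝ :=
  Φ μ' - Φ μ - ip (g μ) (fun θ => μ' θ - μ θ)

/-- The proper loss `λ^Φ(μ) = Φ*(∇Φ(μ))·𝟏 − ∇Φ(μ)` associated with entropy `Φ`
with gradient `g`. -/
noncomputable def lamLoss {Θ : Type*} [Fintype Θ] (Φ : (Θ → ℝ) → ℝ)
    (g : (Θ → ℝ) → Θ → ℝ) (μ : Θ → ℝ) : Θ → ℝ :=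
  fun θ => conjF Φ (g μ) - g μ θ

/-- Negative Shannon entropy `(−H)(μ) = ∑ θ, μ(θ) log μ(θ)` (with `0 log 0 = 0`,
since `Real.log 0 = 0`). -/
noncomputable def negH {Θ : Type*} [Fintype Θ] (μ : Θ → ℝ) : ℝ :=
  ∑ θ, μ θ * Real.log (μ θ)

lemma toCLM_apply {Θ : Type*} [Fintype Θ] (g v : Θ → ℝ) : toCLM g v = ip g v := by
  simp [toCLM, ip, ContinuousLinearMap.sum_apply]

lemma probSimplex_eq_stdSimplex (Θ : Type*) [Fintype Θ] :
    probSimplex Θ = stdSimplex ℝ Θ := rfl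

/-- Gradient inequality: Bregman divergence is nonnegative. -/
lemma bregDiv_nonneg {Θ : Type*} [Fintype Θ]
    (Φ : (Θ → ℝ) → ℝ) (gradΦ : (Θ → ℝ) → Θ → ℝ)
    (hconv : ConvexOn ℝ (probSimplex Θ) Φ)
    (μ : Θ → ℝ) (hμ : μ ∈ probSimplexRI Θ)
    (hd : HasFDerivWithinAt Φ (toCLM (gradΦ μ)) (probSimplex Θ) μ)
    (μ' : Θ → ℝ) (hμ' : μ' ∈ probSimplex Θ) :
    0 ≤ bregDiv Φ gradΦ μ' μ := by
  have hμS : μ ∈ probSimplex Θ := ⟨fun θ => (hμ.1 θ).le, hμ.2⟩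
  by_cases hne : μ' = μ
  · simp [hne, bregDiv, ip]
  -- the line γ t = μ + t • (μ' - μ)
  set γ : ℝ → (Θ → ℝ) := fun t => μ + t • (μ' - μ) with hγ
  have hmaps : Set.MapsTo γ (Set.Icc (0:ℝ) 1) (probSimplex Θ) := by
    intro t ht
    have := hconv.1 hμS hμ' (show (0:ℝ) ≤ 1 - t by linarith [ht.2]) ht.1 (by ring)
    convert this using 1
    funext θ; simp [hγ]; ring
  have hγd : HasDerivWithinAt γ (μ' - μ) (Set.Icc (0:ℝ) 1) 0 := by
    have : HasDerivAt γ (μ' - μ) 0 := by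
      have h1 : HasDerivAt (fun t : ℝ => t • (μ' - μ)) (μ' - μ) 0 := by
        simpa using (hasDerivAt_id (0:ℝ)).smul_const (μ' - μ)
      simpa [hγ] using h1.const_add μ
    exact this.hasDerivWithinAt
  have hγ0 : γ 0 = μ := by funext θ; simp [hγ]
  have hcomp : HasDerivWithinAt (Φ ∘ γ) (toCLM (gradΦ μ) (μ' - μ)) (Set.Icc (0:ℝ) 1) 0 := by
    have hd' : HasFDerivWithinAt Φ (toCLM (gradΦ μ)) (probSimplex Θ) (γ 0) := by
      rwa [hγ0]
    exact hd'.comp_hasDerivWithinAt (0:ℝ) hγd hmaps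
  -- slope bound from convexity
  have hslope : ∀ t ∈ Set.Ioc (0:ℝ) 1, slope (Φ ∘ γ) 0 t ≤ Φ μ' - Φ μ := by
    intro t ht
    have hc := hconv.2 hμS hμ' (show (0:ℝ) ≤ 1 - t by linarith [ht.2]) ht.1.le (by ring)
    have hγt : γ t = (1 - t) • μ + t • μ' := by funext θ; simp [hγ]; ring
    rw [slope_def_field]
    have : Φ (γ t) ≤ (1 - t) * Φ μ + t * Φ μ' := by rw [hγt]; simpa using hc
    have ht0 : (0:ℝ) < t := ht.1
    simp only [Function.comp_apply, hγ0, sub_zero]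
    rw [div_le_iff₀ ht0]
    nlinarith [this]
  have htend := hasDerivWithinAt_iff_tendsto_slope.1 hcomp
  have hIoc : Set.Icc (0:ℝ) 1 \ {0} = Set.Ioc 0 1 := by
    ext t; simp [Set.mem_Ioc, Set.mem_Icc, and_comm, lt_iff_le_and_ne, and_assoc, eq_comm]
  rw [hIoc] at htend
  have hneb : (nhdsWithin (0:ℝ) (Set.Ioc 0 1)).NeBot := left_nhdsWithin_Ioc_neBot one_pos
  have hle : toCLM (gradΦ μ) (μ' - μ) ≤ Φ μ' - Φ μ := by
    refine le_of_tendsto htend ?_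
    filter_upwards [self_mem_nhdsWithin] with t ht using hslope t ht
  have hipeq : toCLM (gradΦ μ) (μ' - μ) = ip (gradΦ μ) (fun θ => μ' θ - μ θ) := by
    rw [toCLM_apply]; rfl
  rw [hipeq] at hle
  simp only [bregDiv]; linarith

/-- Lemma 4 of the paper: for a differentiable entropy `Φ`,
`−Φ*(−λ^Φ(μ) − a) = inf_{μ' ∈ Δ_Θ} ⟨μ', a⟩ + D_Φ(μ', μ)`; consequently
`c ≤ −Φ*(−λ^Φ(μ) − a)` iff `c ≤ ⟨μ', a⟩ + D_Φ(μ', μ)` for all `μ' ∈ Δ_Θ`. -/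
theorem mixability_divergence_form {Θ : Type*} [Fintype Θ] [Nonempty Θ]
    (Φ : (Θ → ℝ) → ℝ) (gradΦ : (Θ → ℝ) → Θ → ℝ)
    (hconv : ConvexOn ℝ (probSimplex Θ) Φ)
    (hlsc : LowerSemicontinuousOn Φ (probSimplex Θ))
    (hdiff : ∀ μ ∈ probSimplexRI Θ,
      HasFDerivWithinAt Φ (toCLM (gradΦ μ)) (probSimplex Θ) μ)
    (μ : Θ → ℝ) (hμ : μ ∈ probSimplexRI Θ) (a : Θ → ℝ) :
    (-conjF Φ (-(lamLoss Φ gradΦ μ) - a)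
        = sInf ((fun μ' => ip μ' a + bregDiv Φ gradΦ μ' μ) '' probSimplex Θ)) ∧
      ∀ c : ℝ,
        (c ≤ -conjF Φ (-(lamLoss Φ gradΦ μ) - a)
          ↔ ∀ μ' ∈ probSimplex Θ, c ≤ ip μ' a + bregDiv Φ gradΦ μ' μ) := by
  have hμS : μ ∈ probSimplex Θ := ⟨fun θ => (hμ.1 θ).le, hμ.2⟩
  have hbreg : ∀ μ' ∈ probSimplex Θ, 0 ≤ bregDiv Φ gradΦ μ' μ :=
    fun μ' hμ' => bregDiv_nonneg Φ gradΦ hconv μ hμ (hdiff μ hμ) μ' hμ'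
  -- Fenchel equality: conjF Φ (gradΦ μ) = ip μ (gradΦ μ) - Φ μ
  have hip_symm : ∀ v w : Θ → ℝ, ip v w = ip w v := by
    intro v w; simp [ip, mul_comm]
  have hconj : conjF Φ (gradΦ μ) = ip μ (gradΦ μ) - Φ μ := by
    apply IsGreatest.csSup_eq
    constructor
    · exact ⟨μ, hμS, rfl⟩
    · rintro x ⟨μ', hμ', rfl⟩
      dsimp only
      have h := hbreg μ' hμ'
      have hipd : ip (gradΦ μ) (fun θ => μ' θ - μ θ)
          = ip μ' (gradΦ μ) - ip μ (gradΦ μ) := by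
        simp [ip, mul_comm, sub_mul, Finset.sum_sub_distrib, mul_sub]
      simp only [bregDiv, hipd] at h
      linarith
  -- pointwise identity on the simplex
  have hpt : ∀ μ' ∈ probSimplex Θ,
      ip μ' (-(lamLoss Φ gradΦ μ) - a) - Φ μ'
        = -(ip μ' a + bregDiv Φ gradΦ μ' μ) := by
    intro μ' hμ'
    have hsum : ∑ θ, μ' θ = 1 := hμ'.2
    have hipd : ip (gradΦ μ) (fun θ => μ' θ - μ θ)
        = ip μ' (gradΦ μ) - ip μ (gradΦ μ) := by
      simp [ip, mul_comm, sub_mul, Finset.sum_sub_distrib, mul_sub]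
    have hlhs : ip μ' (-(lamLoss Φ gradΦ μ) - a)
        = -conjF Φ (gradΦ μ) + ip μ' (gradΦ μ) - ip μ' a := by
      simp only [ip, lamLoss, Pi.sub_apply, Pi.neg_apply]
      rw [show ∑ θ, μ' θ * (-(conjF Φ (gradΦ μ) - gradΦ μ θ) - a θ)
          = ∑ θ, (-(μ' θ * conjF Φ (gradΦ μ)) + (μ' θ * gradΦ μ θ - μ' θ * a θ))
          from Finset.sum_congr rfl fun θ _ => by ring]
      rw [Finset.sum_add_distrib, Finset.sum_sub_distrib]
      rw [Finset.sum_neg_distrib, ← Finset.sum_mul, hsum]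
      ring
    rw [hlhs, hconj]
    simp only [bregDiv, hipd]
    ring
  -- conjF set is negation of inf set
  set T : Set ℝ := (fun μ' => ip μ' a + bregDiv Φ gradΦ μ' μ) '' probSimplex Θ with hT
  have himg : (fun μ' => ip μ' (-(lamLoss Φ gradΦ μ) - a) - Φ μ') '' probSimplex Θ = -T := by
    rw [hT, ← Set.image_neg_eq_neg, Set.image_image]
    exact Set.image_congr hpt
  have hmain : -conjF Φ (-(lamLoss Φ gradΦ μ) - a) = sInf T := by
    rw [conjF, himg, Real.sInf_def]
  refine ⟨hmain, fun c => ?_⟩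
  rw [hmain]
  -- T nonempty and bounded below
  have hTne : T.Nonempty := ⟨_, μ, hμS, rfl⟩
  have hbdd : BddBelow T := by
    refine ⟨-∑ θ, |a θ|, ?_⟩
    rintro x ⟨μ', hμ', rfl⟩
    dsimp only
    have h1 : -∑ θ, |a θ| ≤ ip μ' a := by
      have : ∀ θ ∈ Finset.univ (α := Θ), μ' θ * (-∑ θ', |a θ'|) ≤ μ' θ * a θ := by
        intro θ _
        apply mul_le_mul_of_nonneg_left _ (hμ'.1 θ)
        calc -∑ θ', |a θ'| ≤ -|a θ| := by
              apply neg_le_neg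
              exact Finset.single_le_sum (f := fun θ' => |a θ'|)
                (fun θ' _ => abs_nonneg _) (Finset.mem_univ θ)
          _ ≤ a θ := neg_abs_le _
      calc -∑ θ, |a θ| = ∑ θ, μ' θ * (-∑ θ', |a θ'|) := by
            rw [← Finset.sum_mul, hμ'.2]; ring
        _ ≤ ∑ θ, μ' θ * a θ := Finset.sum_le_sum this
        _ = ip μ' a := rfl
    linarith [hbreg μ' hμ']
  constructor
  · intro hc μ' hμ'
    exact hc.trans (csInf_le hbdd ⟨μ', hμ', rfl⟩)
  · intro hc
    refine le_csInf hTne ?_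
    rintro x ⟨μ', hμ', rfl⟩
    exact hc μ' hμ'
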